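/- There exists a finite-or-infinite strategy profile that is convergent but not always-convergent: ∃ s ∈ InfStratProf, conv(s) ∧ ¬□conv(s). A witness is the profile s_{1□2} of Figure 2, whose root agent A chooses 1 into a leaf while the remainder of the comb cycles with both agents choosing 2. -/

import Mathlib

noncomputable section

/-- The two agents. -/
inductive Ag : Type
  | A
  | B
deriving DecidableEq

/-- The set of choices `{1, 2}`. -/
inductive Choice : Type
  | one
  | two
deriving DecidableEq

/-- The polynomial functor whose final coalgebra is the set of finite or
infinite strategy profiles: a node is either an ending position carrying a
utility assignment (no children) or an internal position carrying an agent
and a choice (two children, indexed by `Bool`). -/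
def SPF (Agent : Type) : PFunctor.{0} :=
  ⟨(Agent → ℝ) ⊕ (Agent × Choice), fun x => Sum.rec (fun _ => Empty) (fun _ => Bool) x⟩

/-- Finite or infinite strategy profiles, as the M-type (final coalgebra). -/
def StratProf (Agent : Type) : Type :=
  (SPF Agent).M

/-- The ending position `⟨u⟩`. -/
def leafP {Agent : Type} (u : Agent → ℝ) : StratProf Agent :=
  PFunctor.M.mk ⟨Sum.inl u, fun e => Empty.elim e⟩

/-- The strategy profile `⟨a, c, s₁, s₂⟩`. -/
def nodeP {Agent : Type} (a : Agent) (c : Choice) (s₁ s₂ : StratProf Agent) :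
    StratProf Agent :=
  PFunctor.M.mk ⟨Sum.inr (a, c), fun b => bif b then s₂ else s₁⟩

/-- The child selected by choice `c`. -/
def cchild {Agent : Type} (c : Choice) (s₁ s₂ : StratProf Agent) : StratProf Agent :=
  match c with
  | .one => s₁
  | .two => s₂

/-- `conv s`: following the choices of `s` reaches an ending position after
finitely many steps (inductive definition). -/
inductive Conv {Agent : Type} : StratProf Agent → Prop
  | leaf (u : Agent → ℝ) : Conv (leafP u)
  | node1 (a : Agent) (s₁ s₂ : StratProf Agent) :
      Conv s₁ → Conv (nodeP a Choice.one s₁ s₂)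
  | node2 (a : Agent) (s₁ s₂ : StratProf Agent) :
      Conv s₂ → Conv (nodeP a Choice.two s₁ s₂)

/-- The graph of the (partial) utility assignment `ŝ`:
`UtilR s u` holds iff following the choices of `s` reaches the ending
position `⟨u⟩`. -/
inductive UtilR {Agent : Type} : StratProf Agent → (Agent → ℝ) → Prop
  | leaf (u : Agent → ℝ) : UtilR (leafP u) u
  | node1 (a : Agent) (s₁ s₂ : StratProf Agent) (u : Agent → ℝ) :
      UtilR s₁ u → UtilR (nodeP a Choice.one s₁ s₂) u
  | node2 (a : Agent) (s₁ s₂ : StratProf Agent) (u : Agent → ℝ) :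
      UtilR s₂ u → UtilR (nodeP a Choice.two s₁ s₂) u

open Classical in
/-- The utility assignment `ŝ` (an arbitrary default on non-convergent
profiles). -/
def util {Agent : Type} (s : StratProf Agent) : Agent → ℝ :=
  if h : ∃ u, UtilR s u then h.choose else fun _ => 0

/-- `□P`, the coinductive `always` modality: `P` holds at every position of
the strategy profile (greatest fixed point). -/
def Always {Agent : Type} (P : StratProf Agent → Prop) (s : StratProf Agent) : Prop :=
  ∃ R : StratProf Agent → Prop, R s ∧ ∀ t, R t →
    P t ∧ ∀ a c s₁ s₂, t = nodeP a c s₁ s₂ → R s₁ ∧ R s₂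

/-- `PE s`: `s` is always-convergent and the choice at the root of `s` is at
least as good, for the agent who owns the root, as the other choice. -/
def PE {Agent : Type} (s : StratProf Agent) : Prop :=
  Always Conv s ∧
    (∀ a s₁ s₂, s = nodeP a Choice.one s₁ s₂ → util s₁ a ≥ util s₂ a) ∧
    (∀ a s₁ s₂, s = nodeP a Choice.two s₁ s₂ → util s₂ a ≥ util s₁ a)

/-- Subgame perfect equilibrium: `□PE`. -/
def SPE {Agent : Type} : StratProf Agent → Prop :=
  Always PE

/-- `s =_g s'`: the two strategy profiles have the same underlying game
(coinductive definition). -/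
def SameGame {Agent : Type} (s s' : StratProf Agent) : Prop :=
  ∃ R : StratProf Agent → StratProf Agent → Prop, R s s' ∧ ∀ t t', R t t' →
    (∃ u, t = leafP u ∧ t' = leafP u) ∨
    (∃ a c c' s₁ s₂ s₁' s₂',
      t = nodeP a c s₁ s₂ ∧ t' = nodeP a c' s₁' s₂' ∧ R s₁ s₁' ∧ R s₂ s₂')

/-- `Rat_∞`: rationality for finite or infinite strategy profiles
(coinductive definition). -/
def RatInf {Agent : Type} (s : StratProf Agent) : Prop :=
  ∃ R : StratProf Agent → Prop, R s ∧ ∀ t, R t →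
    (∃ u, t = leafP u) ∨
    (∃ a c s₁ s₂ s₁' s₂', t = nodeP a c s₁ s₂ ∧
      SameGame (nodeP a c s₁' s₂') (nodeP a c s₁ s₂) ∧
      SPE (nodeP a c s₁' s₂') ∧ R (cchild c s₁ s₂))

/-- `diverg`: following the choices never reaches an ending position
(coinductive definition). -/
def Diverg {Agent : Type} (s : StratProf Agent) : Prop :=
  ∃ R : StratProf Agent → Prop, R s ∧ ∀ t, R t →
    ∃ a c s₁ s₂, t = nodeP a c s₁ s₂ ∧ R (cchild c s₁ s₂)

/-- The divergent comb: every node is owned by `A` choosing `2`, all children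
are the comb itself. -/
def comb : StratProf Ag :=
  PFunctor.M.corec (fun _ : Unit => ⟨Sum.inr (Ag.A, Choice.two), fun _ => ()⟩) ()

lemma comb_eq : comb = nodeP Ag.A Choice.two comb comb := by
  have h : PFunctor.M.dest comb =
      ⟨Sum.inr (Ag.A, Choice.two), fun _ => comb⟩ := by
    rw [comb]; refine (PFunctor.M.dest_corec _ _).trans ?_
    rfl
  conv_lhs => rw [← PFunctor.M.mk_dest comb, h]
  rw [nodeP]
  congr 1
  congr 1
  funext b
  cases b <;> rfl

lemma not_conv_comb : ¬ Conv comb := by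
  suffices h : ∀ x : StratProf Ag, Conv x → x ≠ comb by
    intro hc
    exact h comb hc rfl
  intro x hx
  induction hx with
  | leaf u =>
      intro h
      have := congrArg PFunctor.M.dest h
      rw [comb_eq] at this
      simp only [leafP, nodeP, PFunctor.M.dest_mk] at this
      exact Sum.inl_ne_inr (congrArg (fun x : (SPF Ag).Obj (StratProf Ag) => x.1) ((PFunctor.M.dest_mk _).symm.trans (this.trans (PFunctor.M.dest_mk _))))
  | node1 a s₁ s₂ h ih =>
      intro h'
      have := congrArg PFunctor.M.dest h'
      rw [comb_eq] at this
      simp only [nodeP, PFunctor.M.dest_mk] at this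
      have h1 := congrArg Sigma.fst this
      injection h1 with h2
      exact Choice.noConfusion (congrArg Prod.snd h2)
  | node2 a s₁ s₂ h ih =>
      intro h'
      have := congrArg PFunctor.M.dest h'
      rw [comb_eq] at this
      simp only [nodeP, PFunctor.M.dest_mk] at this
      injection this with h1 h2
      exact ih (congrFun h2 true)

/-- There exists a strategy profile which is convergent but not
always-convergent: `∃ s, conv(s) ∧ ¬ □conv(s)` (a witness is the profile
`s_{1□2}`, whose root agent chooses 1 into a leaf while the remainder of the
comb cycles with both agents choosing 2). -/
theorem exists_conv_not_alwaysConv :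
    ∃ s : StratProf Ag, Conv s ∧ ¬ Always Conv s := by
  refine ⟨nodeP Ag.A Choice.one (leafP fun _ => 0) comb, ?_, ?_⟩
  · exact Conv.node1 _ _ _ (Conv.leaf _)
  · rintro ⟨R, hs, h⟩
    have hRt : R comb :=
      ((h _ hs).2 Ag.A Choice.one (leafP fun _ => 0) comb rfl).2
    exact not_conv_comb (h _ hRt).1
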